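/- An argument A belongs to the grounded extension of a finite argumentation framework if and only if there exists a strongly admissible labelling that labels A in. -/
import Mathlib


inductive Label where
  | inn | out | und
deriving DecidableEq

/-- A labelling is admissible if every in-labelled argument has all its attackers
labelled out, and every out-labelled argument has at least one in-labelled attacker. -/
def Admissible {Ar : Type*} (att : Ar → Ar → Prop) (L : Ar → Label) : Prop :=
  (∀ x, L x = Label.inn → ∀ y, att y x → L y = Label.out) ∧
  (∀ x, L x = Label.out → ∃ y, att y x ∧ L y = Label.inn)

/-- A min-max numbering (with only natural-number values): in-arguments are numbered
1 + max of the numbers of their out-labelled attackers (max ∅ = 0), and out-arguments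
1 + min of the numbers of their in-labelled attackers. -/
def IsMinMax {Ar : Type*} (att : Ar → Ar → Prop) (L : Ar → Label) (MM : Ar → ℕ) : Prop :=
  (∀ x, L x = Label.inn → MM x = sSup (MM '' {y | att y x ∧ L y = Label.out}) + 1) ∧
  (∀ x, L x = Label.out → MM x = sInf (MM '' {y | att y x ∧ L y = Label.inn}) + 1)

/-- Strongly admissible: admissible and admitting a min-max numbering with only
natural-number (finite) values. -/
def StronglyAdmissible {Ar : Type*} (att : Ar → Ar → Prop) (L : Ar → Label) : Prop :=
  Admissible att L ∧ ∃ MM : Ar → ℕ, IsMinMax att L MM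

/-- Complete labelling: admissible, and every undec argument has an undec attacker
and no in-labelled attacker. -/
def CompleteLab {Ar : Type*} (att : Ar → Ar → Prop) (L : Ar → Label) : Prop :=
  Admissible att L ∧
  ∀ x, L x = Label.und →
    (∃ y, att y x ∧ L y = Label.und) ∧ ∀ y, att y x → L y ≠ Label.inn

/-- The order on labellings: Lab1 ⊑ Lab2 iff in(Lab1) ⊆ in(Lab2) and out(Lab1) ⊆ out(Lab2). -/
def LabLe {Ar : Type*} (L1 L2 : Ar → Label) : Prop :=
  (∀ x, L1 x = Label.inn → L2 x = Label.inn) ∧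
  (∀ x, L1 x = Label.out → L2 x = Label.out)

/- ----------------- auxiliary development ----------------- -/

section Aux

variable {Ar : Type*}

/-- The defense operator: arguments all of whose attackers are attacked by `S`. -/
def Fop (att : Ar → Ar → Prop) (S : Set Ar) : Set Ar :=
  {x | ∀ y, att y x → ∃ z ∈ S, att z y}

/-- Iterations of the defense operator from ∅. -/
def Itn (att : Ar → Ar → Prop) : ℕ → Set Ar
  | 0 => ∅
  | n + 1 => Fop att (Itn att n)

/-- Union of all iterations: the grounded extension. -/
def Gset (att : Ar → Ar → Prop) : Set Ar := {x | ∃ n, x ∈ Itn att n}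

lemma Fop_mono {att : Ar → Ar → Prop} {S T : Set Ar} (h : S ⊆ T) :
    Fop att S ⊆ Fop att T := by
  intro x hx y hyx
  obtain ⟨z, hz, hzy⟩ := hx y hyx
  exact ⟨z, h hz, hzy⟩

lemma Itn_succ_mono (att : Ar → Ar → Prop) : ∀ n, Itn att n ⊆ Itn att (n + 1) := by
  intro n
  induction n with
  | zero => intro x hx; exact hx.elim
  | succ k ih => exact Fop_mono ih

lemma Itn_mono (att : Ar → Ar → Prop) {m n : ℕ} (h : m ≤ n) :
    Itn att m ⊆ Itn att n := by
  induction h with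
  | refl => exact le_refl _
  | step h ih => exact ih.trans (Itn_succ_mono att _)

lemma Itn_subset_G (att : Ar → Ar → Prop) (n : ℕ) : Itn att n ⊆ Gset att :=
  fun x hx => ⟨n, hx⟩

/-- Attackers of arguments in `Itn n` are not in the grounded extension. -/
lemma attacker_not_G (att : Ar → Ar → Prop) :
    ∀ n, ∀ x ∈ Itn att n, ∀ y, att y x → y ∉ Gset att := by
  intro n
  induction n with
  | zero => intro x hx; exact hx.elim
  | succ k ih =>
    intro x hx y hyx hyG
    obtain ⟨m, hm⟩ := hyG
    cases m with
    | zero => exact hm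
    | succ j =>
      obtain ⟨z, hz, hzy⟩ := hx y hyx
      obtain ⟨w, hw, hwz⟩ := hm z hzy
      exact ih z hz w hwz ⟨j, hw⟩

/-- Rank: the least iteration an argument of the grounded extension appears in. -/
noncomputable def rk (att : Ar → Ar → Prop) (x : Ar) : ℕ :=
  sInf {n | x ∈ Itn att n}

lemma mem_Itn_rk {att : Ar → Ar → Prop} {x : Ar} (h : x ∈ Gset att) :
    x ∈ Itn att (rk att x) :=
  Nat.sInf_mem h

lemma rk_le {att : Ar → Ar → Prop} {x : Ar} {m : ℕ} (h : x ∈ Itn att m) :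
    rk att x ≤ m :=
  Nat.sInf_le h

lemma not_mem_Itn_lt_rk {att : Ar → Ar → Prop} {x : Ar} (h : x ∈ Gset att)
    {k : ℕ} (hk : k < rk att x) : x ∉ Itn att k := by
  intro hmem
  exact absurd (rk_le hmem) (not_le.mpr hk)

lemma rk_pos {att : Ar → Ar → Prop} {x : Ar} (h : x ∈ Gset att) : 1 ≤ rk att x := by
  rcases Nat.eq_zero_or_pos (rk att x) with h0 | h1
  · have := mem_Itn_rk h
    rw [h0] at this
    exact this.elim
  · exact h1

/-- Out-rank: the least iteration whose members attack `x`. -/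
noncomputable def sN (att : Ar → Ar → Prop) (x : Ar) : ℕ :=
  sInf {m | ∃ z ∈ Itn att m, att z x}

/-- The grounded labelling. -/
noncomputable def Lstar (att : Ar → Ar → Prop) (x : Ar) : Label :=
  by classical exact
    if x ∈ Gset att then Label.inn
    else if ∃ y ∈ Gset att, att y x then Label.out else Label.und

/-- The min-max numbering of the grounded labelling. -/
noncomputable def MMstar (att : Ar → Ar → Prop) (x : Ar) : ℕ :=
  by classical exact
    if x ∈ Gset att then 2 * rk att x - 1
    else if ∃ y ∈ Gset att, att y x then 2 * sN att x else 0

lemma Lstar_inn_iff {att : Ar → Ar → Prop} {x : Ar} :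
    Lstar att x = Label.inn ↔ x ∈ Gset att := by
  unfold Lstar
  by_cases h : x ∈ Gset att
  · simp [h]
  · by_cases h2 : ∃ y ∈ Gset att, att y x <;> simp [h, h2]

lemma Lstar_out_iff {att : Ar → Ar → Prop} {x : Ar} :
    Lstar att x = Label.out ↔ x ∉ Gset att ∧ ∃ y ∈ Gset att, att y x := by
  unfold Lstar
  by_cases h : x ∈ Gset att
  · simp [h]
  · by_cases h2 : ∃ y ∈ Gset att, att y x <;> simp [h, h2]

lemma Lstar_und_iff {att : Ar → Ar → Prop} {x : Ar} :
    Lstar att x = Label.und ↔ x ∉ Gset att ∧ ¬∃ y ∈ Gset att, att y x := by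
  unfold Lstar
  by_cases h : x ∈ Gset att
  · simp [h]
  · by_cases h2 : ∃ y ∈ Gset att, att y x <;> simp [h, h2]

end Aux

section Fin

variable {Ar : Type*} [Fintype Ar]

/-- Every element of the grounded extension appears by stage `N := sup rk`. -/
lemma G_subset_ItnN (att : Ar → Ar → Prop) :
    Gset att ⊆ Itn att (Finset.univ.sup (rk att)) := by
  intro x hx
  exact Itn_mono att (Finset.le_sup (Finset.mem_univ x)) (mem_Itn_rk hx)

lemma Fop_G_subset (att : Ar → Ar → Prop) : Fop att (Gset att) ⊆ Gset att := by
  intro x hx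
  exact ⟨Finset.univ.sup (rk att) + 1, Fop_mono (G_subset_ItnN att) hx⟩

/-- The grounded labelling is complete. -/
lemma Lstar_complete (att : Ar → Ar → Prop) : CompleteLab att (Lstar att) := by
  constructor
  · constructor
    · intro x hx y hyx
      have hxG : x ∈ Gset att := Lstar_inn_iff.mp hx
      have hyG : y ∉ Gset att := attacker_not_G att _ _ (mem_Itn_rk hxG) y hyx
      -- x ∈ Itn (rk x); rk x ≥ 1 so Itn (rk x) = Fop (Itn (rk x - 1))
      have h1 := rk_pos hxG
      have hxF : x ∈ Fop att (Itn att (rk att x - 1)) := by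
        have : rk att x - 1 + 1 = rk att x := by omega
        have := mem_Itn_rk hxG
        rwa [← ‹rk att x - 1 + 1 = rk att x›] at this
      obtain ⟨z, hz, hzy⟩ := hxF y hyx
      exact Lstar_out_iff.mpr ⟨hyG, z, Itn_subset_G att _ hz, hzy⟩
    · intro x hx
      obtain ⟨_, y, hyG, hyx⟩ := Lstar_out_iff.mp hx
      exact ⟨y, hyx, Lstar_inn_iff.mpr hyG⟩
  · intro x hx
    obtain ⟨hxG, hnoatt⟩ := Lstar_und_iff.mp hx
    constructor
    · -- x ∉ G so x ∉ Fop G, so some attacker not attacked by G; that attacker is und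
      have hxF : x ∉ Fop att (Gset att) := fun h => hxG (Fop_G_subset att h)
      simp only [Fop, Set.mem_setOf_eq] at hxF
      push_neg at hxF
      obtain ⟨y, hyx, hy⟩ := hxF
      refine ⟨y, hyx, Lstar_und_iff.mpr ⟨?_, ?_⟩⟩
      · intro hyG
        exact hnoatt ⟨y, hyG, hyx⟩
      · intro ⟨z, hzG, hzy⟩
        exact hy z hzG hzy
    · intro y hyx hyinn
      exact hnoatt ⟨y, Lstar_inn_iff.mp hyinn, hyx⟩

lemma sN_le {att : Ar → Ar → Prop} {x z : Ar} {m : ℕ} (hz : z ∈ Itn att m)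
    (hzx : att z x) : sN att x ≤ m :=
  Nat.sInf_le ⟨z, hz, hzx⟩

/-- The min-max numbering works. -/
lemma MMstar_isMinMax (att : Ar → Ar → Prop) :
    IsMinMax att (Lstar att) (MMstar att) := by
  classical
  have hadm := (Lstar_complete att).1
  constructor
  · -- in case
    intro x hx
    have hxG : x ∈ Gset att := Lstar_inn_iff.mp hx
    have h1 := rk_pos hxG
    have hMMx : MMstar att x = 2 * rk att x - 1 := by unfold MMstar; rw [if_pos hxG]
    have hattS : ∀ y, att y x → y ∈ {y | att y x ∧ Lstar att y = Label.out} :=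
      fun y hy => ⟨hy, hadm.1 x hx y hy⟩
    by_cases hSe : ∃ y, att y x
    case neg =>
      -- no attackers: rk x = 1
      have hEmp : {y | att y x ∧ Lstar att y = Label.out} = (∅ : Set Ar) := by
        ext y
        simp only [Set.mem_setOf_eq, Set.mem_empty_iff_false, iff_false]
        intro hy
        exact hSe ⟨y, hy.1⟩
      have hx1 : x ∈ Itn att 1 := by
        intro y hy
        exact absurd (⟨y, hy⟩ : ∃ y, att y x) hSe
      have hrk : rk att x = 1 := le_antisymm (rk_le hx1) h1
      rw [hMMx, hEmp, Set.image_empty, hrk, csSup_empty]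
      simp
    case pos =>
      obtain ⟨y0', hy0'⟩ := hSe
      have hy0 : y0' ∈ {y | att y x ∧ Lstar att y = Label.out} := hattS y0' hy0'
      set y0 := y0' with hy0def
      -- values of MM on S
      have hMMS : ∀ y ∈ {y | att y x ∧ Lstar att y = Label.out}, MMstar att y = 2 * sN att y := by
        intro y hy
        obtain ⟨hynG, hyatt⟩ := Lstar_out_iff.mp hy.2
        unfold MMstar
        rw [if_neg hynG, if_pos hyatt]
      -- (a) each attacker has sN ≤ rk x - 1
      have ha : ∀ y ∈ {y | att y x ∧ Lstar att y = Label.out}, sN att y ≤ rk att x - 1 := by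
        intro y hy
        have hxF : x ∈ Fop att (Itn att (rk att x - 1)) := by
          have heq : rk att x - 1 + 1 = rk att x := by omega
          have := mem_Itn_rk hxG
          rwa [← heq] at this
        obtain ⟨z, hz, hzy⟩ := hxF y hy.1
        exact sN_le hz hzy
      -- rk x ≥ 2 since x has an attacker
      have h2 : 2 ≤ rk att x := by
        by_contra hlt
        have hrk1 : rk att x = 1 := by omega
        have hx1 : x ∈ Itn att 1 := by rw [← hrk1]; exact mem_Itn_rk hxG
        obtain ⟨z, hz, _⟩ := hx1 y0 hy0.1
        exact hz
      -- (b) some attacker has sN = rk x - 1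
      have hb : ∃ y ∈ {y | att y x ∧ Lstar att y = Label.out}, sN att y = rk att x - 1 := by
        by_contra hc
        push_neg at hc
        -- all attackers have sN ≤ rk x - 2, so x ∈ Itn (rk x - 1)
        have hall : ∀ y, att y x → ∃ z ∈ Itn att (rk att x - 2), att z y := by
          intro y hy
          have hyS := hattS y hy
          have hlt : sN att y < rk att x - 1 :=
            lt_of_le_of_ne (ha y hyS) (hc y hyS)
          -- sN is attained
          have hne : {m | ∃ z ∈ Itn att m, att z y}.Nonempty := by
            obtain ⟨_, z, hzG, hzy⟩ := Lstar_out_iff.mp hyS.2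
            exact ⟨rk att z, ⟨z, mem_Itn_rk hzG, hzy⟩⟩
          obtain ⟨z, hz, hzy⟩ := Nat.sInf_mem hne
          have hz' : z ∈ Itn att (sN att y) := hz
          exact ⟨z, Itn_mono att (by omega : sN att y ≤ rk att x - 2) hz', hzy⟩
        have : x ∈ Itn att (rk att x - 1) := by
          have heq : rk att x - 2 + 1 = rk att x - 1 := by omega
          rw [← heq]
          exact hall
        exact not_mem_Itn_lt_rk hxG (by omega) this
      -- compute sSup
      have hsup : sSup (MMstar att '' {y | att y x ∧ Lstar att y = Label.out})
          = 2 * rk att x - 2 := by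
        apply le_antisymm
        · apply csSup_le ((Set.Nonempty.image _ ⟨y0, hy0⟩))
          rintro _ ⟨y, hy, rfl⟩
          rw [hMMS y hy]
          have := ha y hy
          omega
        · obtain ⟨y, hy, hEq⟩ := hb
          have hmem : 2 * rk att x - 2 ∈
              MMstar att '' {y | att y x ∧ Lstar att y = Label.out} := by
            refine ⟨y, hy, ?_⟩
            rw [hMMS y hy, hEq]
            omega
          exact le_csSup ((Set.toFinite _).image _).bddAbove hmem
      rw [hMMx, hsup]
      omega
  · -- out case
    intro x hx
    obtain ⟨hxnG, y0, hy0G, hy0x⟩ := Lstar_out_iff.mp hx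
    have hMMx : MMstar att x = 2 * sN att x := by
      unfold MMstar
      rw [if_neg hxnG, if_pos ⟨y0, hy0G, hy0x⟩]
    have hMMT : ∀ y ∈ {y | att y x ∧ Lstar att y = Label.inn},
        MMstar att y = 2 * rk att y - 1 := by
      intro y hy
      unfold MMstar
      rw [if_pos (Lstar_inn_iff.mp hy.2)]
    -- sN x is attained by some z in G with rk z = sN x
    have hne : {m | ∃ z ∈ Itn att m, att z x}.Nonempty :=
      ⟨rk att y0, ⟨y0, mem_Itn_rk hy0G, hy0x⟩⟩
    obtain ⟨z0, hz0, hz0x⟩ := Nat.sInf_mem hne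
    have hz0G : z0 ∈ Gset att := Itn_subset_G att _ hz0
    have hrkz0 : rk att z0 = sN att x :=
      le_antisymm (rk_le hz0) (sN_le (mem_Itn_rk hz0G) hz0x)
    have hz0T : z0 ∈ {y | att y x ∧ Lstar att y = Label.inn} :=
      ⟨hz0x, Lstar_inn_iff.mpr hz0G⟩
    have hsN1 : 1 ≤ sN att x := by
      rw [← hrkz0]; exact rk_pos hz0G
    have hinf : sInf (MMstar att '' {y | att y x ∧ Lstar att y = Label.inn})
        = 2 * sN att x - 1 := by
      apply le_antisymm
      · apply Nat.sInf_le
        refine ⟨z0, hz0T, ?_⟩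
        rw [hMMT z0 hz0T, hrkz0]
      · apply le_csInf (Set.Nonempty.image _ ⟨z0, hz0T⟩)
        rintro _ ⟨y, hy, rfl⟩
        rw [hMMT y hy]
        have hyG : y ∈ Gset att := Lstar_inn_iff.mp hy.2
        have : sN att x ≤ rk att y := sN_le (mem_Itn_rk hyG) hy.1
        have := rk_pos hyG
        omega
    rw [hMMx, hinf]
    omega

/-- Strong admissibility implies membership in every "grounded-like" labelling:
    key induction for the backward direction. -/
lemma stradm_le_complete (att : Ar → Ar → Prop) (Lgr L : Ar → Label)
    (hLgr : CompleteLab att Lgr) (hadm : Admissible att L)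
    (MM : Ar → ℕ) (hMM : IsMinMax att L MM) :
    ∀ n, ∀ x, MM x = n →
      (L x = Label.inn → Lgr x = Label.inn) ∧
      (L x = Label.out → Lgr x = Label.out) := by
  intro n
  induction n using Nat.strong_induction_on with
  | _ n ih =>
    intro x hMMx
    constructor
    · intro hxin
      -- all attackers are out with smaller MM
      have hattlgr : ∀ y, att y x → Lgr y = Label.out := by
        intro y hy
        have hyout : L y = Label.out := hadm.1 x hxin y hy
        have hsup : MM x = sSup (MM '' {y | att y x ∧ L y = Label.out}) + 1 :=
          hMM.1 x hxin
        have hmem : MM y ∈ MM '' {y | att y x ∧ L y = Label.out} :=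
          ⟨y, ⟨hy, hyout⟩, rfl⟩
        have hle : MM y ≤ sSup (MM '' {y | att y x ∧ L y = Label.out}) :=
          le_csSup ((Set.toFinite _).image _).bddAbove hmem
        have hlt : MM y < n := by omega
        exact (ih (MM y) hlt y rfl).2 hyout
      -- Lgr x must be inn
      cases hLx : Lgr x with
      | inn => rfl
      | out =>
        obtain ⟨y, hyx, hyin⟩ := hLgr.1.2 x hLx
        rw [hattlgr y hyx] at hyin
        exact absurd hyin (by simp)
      | und =>
        obtain ⟨⟨y, hyx, hyund⟩, _⟩ := hLgr.2 x hLx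
        rw [hattlgr y hyx] at hyund
        exact absurd hyund (by simp)
    · intro hxout
      -- some in-attacker with smaller MM (sInf is attained)
      obtain ⟨y1, hy1x, hy1in⟩ := hadm.2 x hxout
      have hinf : MM x = sInf (MM '' {y | att y x ∧ L y = Label.inn}) + 1 :=
        hMM.2 x hxout
      have hne : (MM '' {y | att y x ∧ L y = Label.inn}).Nonempty :=
        ⟨MM y1, y1, ⟨hy1x, hy1in⟩, rfl⟩
      obtain ⟨y, ⟨hyx, hyin⟩, hyval⟩ := Nat.sInf_mem hne
      have hlt : MM y < n := by omega
      have hyLgr : Lgr y = Label.inn := (ih (MM y) hlt y rfl).1 hyin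
      cases hLx : Lgr x with
      | out => rfl
      | inn =>
        have := hLgr.1.1 x hLx y hyx
        rw [hyLgr] at this
        exact absurd this (by simp)
      | und =>
        have := (hLgr.2 x hLx).2 y hyx
        exact absurd hyLgr this

end Fin

/-- An argument A is in the grounded extension iff some strongly
admissible labelling labels A in. -/
theorem grounded_iff_stronglyAdmissible
    {Ar : Type*} [Fintype Ar] (att : Ar → Ar → Prop) (Lgr : Ar → Label)
    (hgr : CompleteLab att Lgr ∧ ∀ L, CompleteLab att L → LabLe Lgr L) (A : Ar) :
    Lgr A = Label.inn ↔ ∃ L : Ar → Label, StronglyAdmissible att L ∧ L A = Label.inn := by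
  constructor
  · intro hA
    refine ⟨Lstar att, ⟨(Lstar_complete att).1, MMstar att, MMstar_isMinMax att⟩, ?_⟩
    exact (hgr.2 (Lstar att) (Lstar_complete att)).1 A hA
  · rintro ⟨L, ⟨hadm, MM, hMM⟩, hA⟩
    exact (stradm_le_complete att Lgr L hgr.1 hadm MM hMM (MM A) A rfl).1 hA
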